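/- Let n > k ≥ 1 and L ≥ 0 be integers. The number of strictly increasing integer sequences 1 ≤ j_1 < j_2 < ⋯ < j_{(L+1)(n−k)} ≤ (L+1)·n satisfying j_{s(n−k)} ≤ s·n for all s = 1, …, L is at most ∏_{s=0}^{L} C(n + s·k, n−k), where C(a,b) denotes the binomial coefficient. -/
import Mathlib

private lemma stmt6_le_apply {N : ℕ} {f : Fin N → ℕ} (hf : StrictMono f)
    (h1 : ∀ i, 1 ≤ f i) : ∀ t (ht : t < N), t + 1 ≤ f ⟨t, ht⟩ := by
  intro t
  induction t with
  | zero => exact fun ht => h1 _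
  | succ t ih =>
      intro ht
      have ht' : t < N := Nat.lt_of_succ_lt ht
      have := hf (show (⟨t, ht'⟩ : Fin N) < ⟨t + 1, ht⟩ by simp [Fin.lt_def])
      have := ih ht'
      omega

set_option maxRecDepth 10000

/-- Let n > k ≥ 1 and L ≥ 0. The number of strictly increasing integer
sequences 1 ≤ j_1 < ⋯ < j_{(L+1)(n−k)} ≤ (L+1)·n with j_{s(n−k)} ≤ s·n for s = 1,…,L
is at most ∏_{s=0}^{L} C(n + s·k, n−k). (Sequences are modelled as strictly monotone
functions j : Fin ((L+1)(n−k)) → ℕ, where `j ⟨i-1, _⟩` is the i-th term j_i.) -/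
theorem stmt6 (n k L : ℕ) (hk : 1 ≤ k) (hkn : k < n) :
    Nat.card {j : Fin ((L + 1) * (n - k)) → ℕ //
      StrictMono j ∧ (∀ i, 1 ≤ j i) ∧ (∀ i, j i ≤ (L + 1) * n) ∧
      ∀ s : ℕ, 1 ≤ s → s ≤ L → ∀ h : s * (n - k) - 1 < (L + 1) * (n - k),
        j ⟨s * (n - k) - 1, h⟩ ≤ s * n}
    ≤ ∏ s ∈ Finset.range (L + 1), Nat.choose (n + s * k) (n - k) := by
  set m := n - k with hm
  have hm0 : 0 < m := by omega
  have hkm : k + m = n := by omega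
  -- the block index bound
  have hidx : ∀ (s : ℕ), s ≤ L → ∀ (i : Fin m), s * m + i.1 < (L + 1) * m := by
    intro s hs i
    have : s * m + i.1 < (s + 1) * m := by
      have := i.2; rw [Nat.add_mul, Nat.one_mul]; omega
    have : (s + 1) * m ≤ (L + 1) * m := Nat.mul_le_mul_right m (by omega)
    omega
  -- upper bound on block values
  have hub : ∀ (j : Fin ((L + 1) * m) → ℕ), StrictMono j → (∀ i, j i ≤ (L + 1) * n) →
      (∀ s : ℕ, 1 ≤ s → s ≤ L → ∀ h : s * m - 1 < (L + 1) * m, j ⟨s * m - 1, h⟩ ≤ s * n) →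
      ∀ (s : ℕ) (hs : s ≤ L) (i : Fin m),
        j ⟨s * m + i.1, hidx s hs i⟩ < n + s * k + (s * m + 1) := by
    intro j hmono hle hcon s hs i
    have hsn : s * k + s * m = s * n := by rw [← Nat.mul_add, hkm]
    rcases Nat.lt_or_ge s L with hsL | hsL
    · -- use the constraint at s+1
      have hlt : (s + 1) * m - 1 < (L + 1) * m := by
        have h1 : (s + 1) * m ≤ (L + 1) * m := Nat.mul_le_mul_right m (by omega)
        have h2 : 0 < (s + 1) * m := Nat.mul_pos (Nat.succ_pos s) hm0
        omega
      have hc := hcon (s + 1) (by omega) (by omega) hlt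
      have hle' : j ⟨s * m + i.1, hidx s hs i⟩ ≤ j ⟨(s + 1) * m - 1, hlt⟩ := by
        apply hmono.monotone
        simp only [Fin.mk_le_mk]
        have := i.2
        rw [Nat.add_mul, Nat.one_mul]
        omega
      have : (s + 1) * n = s * n + n := by ring
      omega
    · have hsL' : s = L := by omega
      have := hle ⟨s * m + i.1, hidx s hs i⟩
      subst hsL'
      have : (s + 1) * n = s * n + n := by ring
      omega
  classical
  -- the injection into products of finsets
  set T : Fin (L + 1) → Type := fun s => {t : Finset (Fin (n + s.1 * k)) // t.card = m} with hT
  have key : Nat.card {j : Fin ((L + 1) * m) → ℕ //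
      StrictMono j ∧ (∀ i, 1 ≤ j i) ∧ (∀ i, j i ≤ (L + 1) * n) ∧
      ∀ s : ℕ, 1 ≤ s → s ≤ L → ∀ h : s * m - 1 < (L + 1) * m,
        j ⟨s * m - 1, h⟩ ≤ s * n} ≤ Nat.card (∀ s : Fin (L + 1), T s) := by
    have hblkdef : ∀ (j : {j : Fin ((L + 1) * m) → ℕ //
        StrictMono j ∧ (∀ i, 1 ≤ j i) ∧ (∀ i, j i ≤ (L + 1) * n) ∧
        ∀ s : ℕ, 1 ≤ s → s ≤ L → ∀ h : s * m - 1 < (L + 1) * m,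
          j ⟨s * m - 1, h⟩ ≤ s * n}) (s : Fin (L + 1)) (i : Fin m),
        j.1 ⟨s.1 * m + i.1, hidx s.1 (by omega) i⟩ - (s.1 * m + 1) < n + s.1 * k := by
      intro j s i
      have := hub j.1 j.2.1 j.2.2.2.1 j.2.2.2.2 s.1 (by omega) i
      omega
    set blk : {j : Fin ((L + 1) * m) → ℕ //
        StrictMono j ∧ (∀ i, 1 ≤ j i) ∧ (∀ i, j i ≤ (L + 1) * n) ∧
        ∀ s : ℕ, 1 ≤ s → s ≤ L → ∀ h : s * m - 1 < (L + 1) * m,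
          j ⟨s * m - 1, h⟩ ≤ s * n} → ∀ s : Fin (L + 1), Fin m → Fin (n + s.1 * k) :=
      fun (j : {j : Fin ((L + 1) * m) → ℕ //
        StrictMono j ∧ (∀ i, 1 ≤ j i) ∧ (∀ i, j i ≤ (L + 1) * n) ∧
        ∀ s : ℕ, 1 ≤ s → s ≤ L → ∀ h : s * m - 1 < (L + 1) * m,
          j ⟨s * m - 1, h⟩ ≤ s * n}) (s : Fin (L + 1)) (i : Fin m) =>
        ⟨j.1 ⟨s.1 * m + i.1, hidx s.1 (by omega) i⟩ - (s.1 * m + 1),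
        hblkdef j s i⟩ with hblk
    have hlo : ∀ (j : {j : Fin ((L + 1) * m) → ℕ //
        StrictMono j ∧ (∀ i, 1 ≤ j i) ∧ (∀ i, j i ≤ (L + 1) * n) ∧
        ∀ s : ℕ, 1 ≤ s → s ≤ L → ∀ h : s * m - 1 < (L + 1) * m,
          j ⟨s * m - 1, h⟩ ≤ s * n}) (s : Fin (L + 1)) (i : Fin m),
        s.1 * m + i.1 + 1 ≤ j.1 ⟨s.1 * m + i.1, hidx s.1 (by omega) i⟩ := by
      intro j s i
      exact stmt6_le_apply j.2.1 j.2.2.1 _ _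
    have hblkmono : ∀ j s, StrictMono (blk j s) := by
      intro j s a b hab
      have h1 := hlo j s a
      have h2 := j.2.1 (show (⟨s.1 * m + a.1, hidx s.1 (by omega) a⟩ :
        Fin ((L + 1) * m)) < ⟨s.1 * m + b.1, hidx s.1 (by omega) b⟩ by
          simp only [Fin.mk_lt_mk]
          have := hab
          rw [Fin.lt_def] at this
          omega)
      exact Fin.mk_lt_mk.mpr (by omega)
    have hcard : ∀ j s, (Finset.image (blk j s) Finset.univ).card = m := by
      intro j s
      rw [Finset.card_image_of_injective _ (hblkmono j s).injective,
        Finset.card_univ, Fintype.card_fin]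
    refine Nat.card_le_card_of_injective
      (fun j => fun s => (⟨Finset.image (blk j s) Finset.univ, hcard j s⟩ : T s)) ?_
    intro j j' hjj
    have hblkeq : ∀ s, blk j s = blk j' s := by
      intro s
      have h1 : Finset.image (blk j s) Finset.univ = Finset.image (blk j' s) Finset.univ := by
        have := congrFun hjj s
        exact Subtype.ext_iff.1 this
      have e1 := Finset.orderEmbOfFin_unique (hcard j s)
        (f := blk j s) (fun x => Finset.mem_image_of_mem _ (Finset.mem_univ x)) (hblkmono j s)
      have e2 := Finset.orderEmbOfFin_unique (hcard j s)
        (f := blk j' s) (fun x => by rw [h1]; exact Finset.mem_image_of_mem _ (Finset.mem_univ x))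
        (hblkmono j' s)
      rw [e1, e2]
    apply Subtype.ext
    funext t
    obtain ⟨t, ht⟩ := t
    have hsle : t / m ≤ L := by
      by_contra hcon
      have : (L + 1) * m ≤ (t / m) * m := Nat.mul_le_mul_right m (by omega)
      have := Nat.div_mul_le_self t m
      omega
    have him : t % m < m := Nat.mod_lt t hm0
    have hti : (t / m) * m + t % m = t := by
      rw [Nat.mul_comm]; exact Nat.div_add_mod t m
    have heq := congrFun (hblkeq ⟨t / m, by omega⟩) ⟨t % m, him⟩
    rw [hblk] at heq
    simp only [Fin.mk.injEq] at heq
    have l1 := hlo j ⟨t / m, by omega⟩ ⟨t % m, him⟩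
    have l2 := hlo j' ⟨t / m, by omega⟩ ⟨t % m, him⟩
    simp only at l1 l2 heq
    have key2 : j.1 ⟨(t / m) * m + t % m, hidx _ hsle ⟨t % m, him⟩⟩ =
        j'.1 ⟨(t / m) * m + t % m, hidx _ hsle ⟨t % m, him⟩⟩ := by omega
    have e : (⟨(t / m) * m + t % m, hidx _ hsle ⟨t % m, him⟩⟩ : Fin ((L + 1) * m)) =
        ⟨t, ht⟩ := Fin.ext hti
    rw [e] at key2
    exact key2
  refine le_trans key ?_
  rw [Nat.card_pi]
  rw [show (∏ s ∈ Finset.range (L + 1), Nat.choose (n + s * k) (n - k)) =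
    ∏ s : Fin (L + 1), Nat.choose (n + s.1 * k) (n - k) from
      (Fin.prod_univ_eq_prod_range (fun s => Nat.choose (n + s * k) (n - k)) (L + 1)).symm]
  apply Finset.prod_le_prod (fun _ _ => Nat.zero_le _)
  intro s _
  rw [hT]
  simp only [Nat.card_eq_fintype_card]
  rw [Fintype.card_finset_len, Fintype.card_fin, hm]
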